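/- An m-dimensional permutation array of order n > 1 has n(n-1) ordered toroidal vectors (counting multiplicity) but only (n-1)^2 admissible values, hence by pigeonhole it has at least one repeated toroidal vector. Consequently, multidimensional modular Costas arrays do not exist. -/
import Mathlib


/-- An `m`-dimensional permutation array of order `N > 1`
(defined by a bijection `φ`, dots `(x, φ x)`) has `N(N-1)` ordered toroidal vectors
taking only `(N-1)²` admissible values, hence some toroidal vector is repeated:
two distinct ordered pairs of distinct dots have equal toroidal vectors.
Consequently, multidimensional modular Costas arrays do not exist. -/
theorem no_modular_costas (k l : ℕ) (n₁ : Fin k → ℕ) (n₂ : Fin l → ℕ)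
    (hn₁ : ∀ i, 2 ≤ n₁ i) (hn₂ : ∀ j, 2 ≤ n₂ j)
    (φ : ((i : Fin k) → Fin (n₁ i)) ≃ ((j : Fin l) → Fin (n₂ j)))
    (hN : 1 < ∏ i, n₁ i) :
    ∃ x₁ y₁ x₂ y₂ : (i : Fin k) → Fin (n₁ i),
      x₁ ≠ y₁ ∧ x₂ ≠ y₂ ∧ (x₁, y₁) ≠ (x₂, y₂) ∧
      (∀ i, (((y₁ i : ℤ) - (x₁ i : ℤ)) : ZMod (n₁ i))
          = (((y₂ i : ℤ) - (x₂ i : ℤ)) : ZMod (n₁ i))) ∧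
      (∀ j, (((φ y₁ j : ℤ) - (φ x₁ j : ℤ)) : ZMod (n₂ j))
          = (((φ y₂ j : ℤ) - (φ x₂ j : ℤ)) : ZMod (n₂ j))) := by
  haveI h1 : ∀ i, NeZero (n₁ i) := fun i => ⟨by have := hn₁ i; omega⟩
  haveI h2 : ∀ j, NeZero (n₂ j) := fun j => ⟨by have := hn₂ j; omega⟩
  -- componentwise equivalences Fin n ≃ ZMod n given by the natural cast
  have mke : ∀ (n : ℕ) [NeZero n], Function.Bijective (fun a : Fin n => ((a : ℕ) : ZMod n)) := by
    intro n hn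
    rw [Fintype.bijective_iff_injective_and_card]
    constructor
    · intro a b hab
      have := congrArg ZMod.val hab
      rw [ZMod.val_cast_of_lt a.isLt, ZMod.val_cast_of_lt b.isLt] at this
      exact Fin.ext this
    · simp [ZMod.card]
  obtain ⟨e, he⟩ : ∃ e : ∀ i, Fin (n₁ i) ≃ ZMod (n₁ i),
      ∀ i (a : Fin (n₁ i)), e i a = ((a : ℕ) : ZMod (n₁ i)) :=
    ⟨fun i => Equiv.ofBijective _ (mke (n₁ i)), fun i a => rfl⟩
  have e₂inj : ∀ j, Function.Injective (fun a : Fin (n₂ j) => ((a : ℕ) : ZMod (n₂ j))) :=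
    fun j => (mke (n₂ j)).1
  -- recover second point from first point and toroidal vector
  set rec : ((i : Fin k) → Fin (n₁ i)) → ((i : Fin k) → ZMod (n₁ i)) → ((i : Fin k) → Fin (n₁ i)) :=
    fun x d i => (e i).symm (e i (x i) + d i) with hrec
  have hrecd : ∀ x d (i : Fin k), e i (rec x d i) - e i (x i) = d i := by
    intro x d i
    rw [hrec]
    simp
  have hrecne : ∀ x d, d ≠ 0 → x ≠ rec x d := by
    intro x d hd hx
    apply hd
    funext i
    have := hrecd x d i
    rw [← hx] at this
    simpa using this.symm
  -- second component of a pair's toroidal data is nonzero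
  have hw : ∀ x d, d ≠ 0 →
      (fun j => ((φ (rec x d) j : ℕ) : ZMod (n₂ j)) - ((φ x j : ℕ) : ZMod (n₂ j)))
        ≠ (0 : (j : Fin l) → ZMod (n₂ j)) := by
    intro x d hd hw0
    apply hrecne x d hd
    apply φ.injective
    funext j
    have := congrFun hw0 j
    simp only [Pi.zero_apply, sub_eq_zero] at this
    exact (e₂inj j this).symm
  -- the pigeonhole map
  set F : (((i : Fin k) → Fin (n₁ i)) × {d : (i : Fin k) → ZMod (n₁ i) // d ≠ 0}) →
      ({v : (i : Fin k) → ZMod (n₁ i) // v ≠ 0} × {w : (j : Fin l) → ZMod (n₂ j) // w ≠ 0}) :=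
    fun p =>
    (p.2, ⟨fun j => ((φ (rec p.1 p.2.1) j : ℕ) : ZMod (n₂ j)) - ((φ p.1 j : ℕ) : ZMod (n₂ j)),
      hw p.1 p.2.1 p.2.2⟩) with hF
  -- cardinalities
  have cardA : Fintype.card ((i : Fin k) → Fin (n₁ i)) = ∏ i, n₁ i := by
    simp [Fintype.card_pi]
  have cardG : Fintype.card ((i : Fin k) → ZMod (n₁ i)) = ∏ i, n₁ i := by
    rw [Fintype.card_pi]; exact Finset.prod_congr rfl fun i _ => ZMod.card _
  have cardH : Fintype.card ((j : Fin l) → ZMod (n₂ j)) = ∏ i, n₁ i := by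
    rw [Fintype.card_pi]
    have h1 : ∏ j, Fintype.card (ZMod (n₂ j)) = ∏ j, n₂ j :=
      Finset.prod_congr rfl fun j _ => ZMod.card _
    have h2 := Fintype.card_congr φ
    simp only [Fintype.card_pi, Fintype.card_fin] at h2
    rw [h1, ← h2]
  have cardGne : Fintype.card {v : (i : Fin k) → ZMod (n₁ i) // v ≠ 0} = ∏ i, n₁ i - 1 := by
    rw [Fintype.card_subtype_compl, Fintype.card_subtype_eq, cardG]
  have cardHne : Fintype.card {w : (j : Fin l) → ZMod (n₂ j) // w ≠ 0} = ∏ i, n₁ i - 1 := by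
    rw [Fintype.card_subtype_compl, Fintype.card_subtype_eq, cardH]
  have hlt : Fintype.card ({v : (i : Fin k) → ZMod (n₁ i) // v ≠ 0}
        × {w : (j : Fin l) → ZMod (n₂ j) // w ≠ 0})
      < Fintype.card (((i : Fin k) → Fin (n₁ i)) × {d : (i : Fin k) → ZMod (n₁ i) // d ≠ 0}) := by
    rw [Fintype.card_prod, Fintype.card_prod, cardGne, cardHne, cardA]
    have : ∏ i, n₁ i - 1 < ∏ i, n₁ i := by omega
    exact Nat.mul_lt_mul_of_lt_of_le this (le_refl _) (by omega)
  obtain ⟨⟨x₁, d₁⟩, ⟨x₂, d₂⟩, hne, heq⟩ := Fintype.exists_ne_map_eq_of_card_lt F hlt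
  rw [hF] at heq
  simp only [Prod.mk.injEq, Subtype.ext_iff] at heq
  obtain ⟨hd12, hw12⟩ := heq
  refine ⟨x₁, rec x₁ d₁.1, x₂, rec x₂ d₂.1, hrecne x₁ d₁.1 d₁.2, hrecne x₂ d₂.1 d₂.2, ?_, ?_, ?_⟩
  · intro hpair
    apply hne
    rw [Prod.mk.injEq] at hpair
    obtain ⟨hx, hy⟩ := hpair
    have hd : d₁ = d₂ := by
      ext i
      rw [← hrecd x₁ d₁.1 i, ← hrecd x₂ d₂.1 i, hy, hx]
    rw [hx, hd]
  · intro i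
    have key : ∀ x (d : {d : (i : Fin k) → ZMod (n₁ i) // d ≠ 0}),
        (((rec x d.1 i : ℤ) - (x i : ℤ)) : ZMod (n₁ i)) = d.1 i := by
      intro x d
      have := hrecd x d.1 i
      rw [he, he] at this
      push_cast
      exact this
    rw [key x₁ d₁, key x₂ d₂, hd12]
  · intro j
    have := congrFun hw12 j
    push_cast
    exact this
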